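/- Let X, Y, X' be geometric data sets. Suppose X' ⪯ X (X dominates X') and let π be a coupling of μ_X and μ_Y realizing d_conc, and u : F̄_X → F̄_Y a map satisfying d_KF^π(f ∘ pr₁, u(f) ∘ pr₂) ≤ d_conc(X, Y) for all f ∈ F̄_X. Then there exists a geometric data set Y' with Y' ⪯ Y, #F_{Y'} ≤ #F_{X'}, and d_conc(X', Y') ≤ d_conc(X, Y). -/

import Mathlib

open MeasureTheory Set
open scoped ENNReal

/-- The Ky Fan (extended) distance between two maps into a pseudo-emetric space. -/
noncomputable def eKyFan {X Y : Type*} [MeasurableSpace X] [PseudoEMetricSpace Y]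
    (μ : Measure X) (f g : X → Y) : ℝ≥0∞ :=
  sInf {ε : ℝ≥0∞ | μ {x | ε < edist (f x) (g x)} ≤ ε}

/-- Hausdorff distance between two families of functions with respect to the
Ky Fan metric. -/
noncomputable def hausKF {X : Type*} [MeasurableSpace X]
    (μ : Measure X) (A B : Set (X → ℝ)) : ℝ≥0∞ :=
  max (⨆ f ∈ A, ⨅ g ∈ B, eKyFan μ f g) (⨆ g ∈ B, ⨅ f ∈ A, eKyFan μ f g)

/-- The closure of a family of functions with respect to the Ky Fan metric. -/
def closKF {X : Type*} [MeasurableSpace X] (μ : Measure X)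
    (F : Set (X → ℝ)) : Set (X → ℝ) :=
  {g | ∀ ε : ℝ≥0∞, 0 < ε → ∃ f ∈ F, eKyFan μ f g < ε}

/-- The observable distance between two (pseudo-)geometric data sets, expressed
as the infimum over couplings of Ky Fan Hausdorff distances of the pulled-back
feature families. -/
noncomputable def dconc {X Y : Type*} [MeasurableSpace X] [MeasurableSpace Y]
    (μX : Measure X) (μY : Measure Y) (FX : Set (X → ℝ)) (FY : Set (Y → ℝ)) : ℝ≥0∞ :=
  ⨅ π ∈ {π : Measure (X × Y) | π.map Prod.fst = μX ∧ π.map Prod.snd = μY},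
    hausKF π ((fun f => f ∘ Prod.fst) '' FX) ((fun g => g ∘ Prod.snd) '' FY)

section aux

variable {X Y Z : Type*} [MeasurableSpace X] [MeasurableSpace Y] [PseudoEMetricSpace Z]

lemma eKyFan_le {μ : Measure X} {f g : X → Z} {ε : ℝ≥0∞}
    (h : μ {x | ε < edist (f x) (g x)} ≤ ε) : eKyFan μ f g ≤ ε := sInf_le h

lemma eKyFan_comm (μ : Measure X) (f g : X → Z) : eKyFan μ f g = eKyFan μ g f := by
  unfold eKyFan; congr 1; ext ε; simp [edist_comm]

lemma eKyFan_triangle (μ : Measure X) (a b c : X → Z) :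
    eKyFan μ a c ≤ eKyFan μ a b + eKyFan μ b c := by
  have key : ∀ x ∈ {ε : ℝ≥0∞ | μ {p | ε < edist (a p) (b p)} ≤ ε},
      ∀ y ∈ {ε : ℝ≥0∞ | μ {p | ε < edist (b p) (c p)} ≤ ε}, eKyFan μ a c ≤ x + y := by
    intro x hx y hy
    refine eKyFan_le ?_
    have hsub : {p | x + y < edist (a p) (c p)} ⊆
        {p | x < edist (a p) (b p)} ∪ {p | y < edist (b p) (c p)} := by
      intro p hp
      by_contra hcon
      simp only [mem_union, mem_setOf_eq, not_or, not_lt] at hcon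
      exact absurd ((edist_triangle (a p) (b p) (c p)).trans
        (add_le_add hcon.1 hcon.2)) (not_le.2 hp)
    calc μ {p | x + y < edist (a p) (c p)}
        ≤ μ ({p | x < edist (a p) (b p)} ∪ {p | y < edist (b p) (c p)}) := measure_mono hsub
      _ ≤ μ {p | x < edist (a p) (b p)} + μ {p | y < edist (b p) (c p)} := measure_union_le _ _
      _ ≤ x + y := add_le_add hx hy
  rw [eKyFan, eKyFan, ENNReal.sInf_add]
  refine le_iInf₂ fun x hx => ?_
  rw [add_comm, eKyFan, ENNReal.sInf_add]
  exact le_iInf₂ fun y hy => (key x hx y hy).trans (add_comm x y).le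

/-- pulling back along a measurable map does not increase the Ky Fan distance. -/
lemma eKyFan_comp_le (μ : Measure X) {q : X → Y} (hq : Measurable q) (f g : Y → Z) :
    eKyFan μ (f ∘ q) (g ∘ q) ≤ eKyFan (μ.map q) f g := by
  refine sInf_le_sInf fun ε hε => ?_
  calc μ {x | ε < edist ((f ∘ q) x) ((g ∘ q) x)}
      = μ (q ⁻¹' {y | ε < edist (f y) (g y)}) := rfl
    _ ≤ (μ.map q) {y | ε < edist (f y) (g y)} := Measure.le_map_apply hq.aemeasurable _
    _ ≤ ε := hε

lemma eKyFan_map_le (μ : Measure X) {q : X → Y} (hq : Measurable q) (f g : Y → Z)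
    (hm : ∀ ε : ℝ≥0∞, MeasurableSet {y | ε < edist (f y) (g y)}) :
    eKyFan (μ.map q) f g ≤ eKyFan μ (f ∘ q) (g ∘ q) := by
  refine sInf_le_sInf fun ε hε => ?_
  calc (μ.map q) {y | ε < edist (f y) (g y)}
      = μ (q ⁻¹' {y | ε < edist (f y) (g y)}) := Measure.map_apply hq (hm ε)
    _ ≤ ε := hε

end aux

universe u

theorem dominated_dconc_nearby {X Y X' : Type u}
    [MetricSpace X] [CompleteSpace X] [TopologicalSpace.SeparableSpace X]
    [MeasurableSpace X] [BorelSpace X]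
    [MetricSpace Y] [CompleteSpace Y] [TopologicalSpace.SeparableSpace Y]
    [MeasurableSpace Y] [BorelSpace Y]
    [MetricSpace X'] [CompleteSpace X'] [TopologicalSpace.SeparableSpace X']
    [MeasurableSpace X'] [BorelSpace X']
    (μX : Measure X) (μY : Measure Y) (μX' : Measure X')
    [IsProbabilityMeasure μX] [IsProbabilityMeasure μY] [IsProbabilityMeasure μX']
    (hsX : ∀ U : Set X, IsOpen U → U.Nonempty → 0 < μX U)
    (hsY : ∀ U : Set Y, IsOpen U → U.Nonempty → 0 < μY U)
    (hsX' : ∀ U : Set X', IsOpen U → U.Nonempty → 0 < μX' U)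
    (FX : Set (X → ℝ)) (FY : Set (Y → ℝ)) (FX' : Set (X' → ℝ))
    (hFXne : FX.Nonempty) (hFYne : FY.Nonempty) (hFX'ne : FX'.Nonempty)
    -- each feature family induces the (extended) metric of its carrier
    (hdX : ∀ x y : X, edist x y = ⨆ f ∈ FX, edist (f x) (f y))
    (hdY : ∀ x y : Y, edist x y = ⨆ g ∈ FY, edist (g x) (g y))
    (hdX' : ∀ x y : X', edist x y = ⨆ h ∈ FX', edist (h x) (h y))
    -- X dominates X' via φ
    (φ : X → X') (hφmeas : Measurable φ) (hφpush : μX.map φ = μX')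
    (hφfeat : ∀ h ∈ FX', h ∘ φ ∈ closKF μX FX)
    -- a coupling realizing `dconc` and a Ky Fan transfer map `u`
    (π : Measure (X × Y)) [IsProbabilityMeasure π]
    (hπ1 : π.map Prod.fst = μX) (hπ2 : π.map Prod.snd = μY)
    (hπopt : hausKF π ((fun f => f ∘ Prod.fst) '' FX) ((fun g => g ∘ Prod.snd) '' FY) =
      dconc μX μY FX FY)
    (u : (X → ℝ) → (Y → ℝ))
    (hu : ∀ f ∈ closKF μX FX, u f ∈ closKF μY FY ∧
      eKyFan π (f ∘ Prod.fst) (u f ∘ Prod.snd) ≤ dconc μX μY FX FY) :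
    ∃ G : Set (Y → ℝ), G ⊆ closKF μY FY ∧
      Cardinal.mk G ≤ Cardinal.mk FX' ∧
      dconc μX' μY FX' G ≤ dconc μX μY FX FY := by
  classical
  refine ⟨(fun h => u (h ∘ φ)) '' FX', ?_, Cardinal.mk_image_le, ?_⟩
  · rintro g ⟨h, hh, rfl⟩
    exact (hu _ (hφfeat h hh)).1
  · set c := dconc μX μY FX FY with hc
    set T : X × Y → X' × Y := Prod.map φ id with hT
    have hTmeas : Measurable T := hφmeas.prodMap measurable_id
    set π' := π.map T with hπ'
    have hm1 : π'.map Prod.fst = μX' := by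
      rw [hπ', Measure.map_map measurable_fst hTmeas]
      have h1 : (Prod.fst ∘ T) = φ ∘ Prod.fst := rfl
      rw [h1, ← Measure.map_map hφmeas measurable_fst, hπ1, hφpush]
    have hm2 : π'.map Prod.snd = μY := by
      rw [hπ', Measure.map_map measurable_snd hTmeas]
      have h1 : (Prod.snd ∘ T) = (Prod.snd : X × Y → Y) := rfl
      rw [h1, hπ2]
    have hcfin : c < ∞ := by
      refine lt_of_le_of_lt (b := 1) ?_ ENNReal.one_lt_top
      rw [← hπopt]
      refine max_le (iSup₂_le fun a ha => ?_) (iSup₂_le fun b hb => ?_)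
      · obtain ⟨g0, hg0⟩ := hFYne
        refine le_trans (iInf₂_le (g0 ∘ Prod.snd) ⟨g0, hg0, rfl⟩) (eKyFan_le ?_)
        exact le_trans (measure_mono (subset_univ _)) (by simp)
      · obtain ⟨f0, hf0⟩ := hFXne
        refine le_trans (iInf₂_le (f0 ∘ Prod.fst) ⟨f0, hf0, rfl⟩) (eKyFan_le ?_)
        exact le_trans (measure_mono (subset_univ _)) (by simp)
    have key : ∀ h ∈ FX', eKyFan π' (h ∘ Prod.fst) (u (h ∘ φ) ∘ Prod.snd) ≤ c := by
      intro h hh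
      have hL : LipschitzWith 1 h := LipschitzWith.of_edist_le fun x y =>
        (le_iSup₂ (f := fun h' (_ : h' ∈ FX') => edist (h' x) (h' y)) h hh).trans (hdX' x y).ge
      have hg := hu (h ∘ φ) (hφfeat h hh)
      set g := u (h ∘ φ) with hgdef
      refine ENNReal.le_of_forall_pos_le_add fun ε hε _ => ?_
      have hε2 : (0 : ℝ≥0∞) < (ε : ℝ≥0∞) / 2 :=
        ENNReal.div_pos (by exact_mod_cast hε.ne') (by norm_num)
      obtain ⟨f, hfFY, hfg⟩ := hg.1 ((ε : ℝ≥0∞) / 2) hε2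
      have hfL : LipschitzWith 1 f := LipschitzWith.of_edist_le fun x y =>
        (le_iSup₂ (f := fun g' (_ : g' ∈ FY) => edist (g' x) (g' y)) f hfFY).trans (hdY x y).ge
      have hmeas : ∀ δ : ℝ≥0∞,
          MeasurableSet {q : X' × Y | δ < edist ((h ∘ Prod.fst) q) ((f ∘ Prod.snd) q)} := by
        intro δ
        have hcont : Continuous fun q : X' × Y => edist ((h ∘ Prod.fst) q) ((f ∘ Prod.snd) q) :=
          continuous_edist.comp ((hL.continuous.comp continuous_fst).prodMk
            (hfL.continuous.comp continuous_snd))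
        exact (isOpen_lt continuous_const hcont).measurableSet
      have e2 : eKyFan π' (f ∘ Prod.snd) (g ∘ Prod.snd) ≤ eKyFan μY f g := by
        have := eKyFan_comp_le π' measurable_snd f g
        rwa [hm2] at this
      have e3 : eKyFan π' (h ∘ Prod.fst) (f ∘ Prod.snd) ≤
          eKyFan π ((h ∘ φ) ∘ Prod.fst) (f ∘ Prod.snd) := by
        have h1 : ((h ∘ Prod.fst) ∘ T) = (h ∘ φ) ∘ (Prod.fst : X × Y → X) := rfl
        have h2 : ((f ∘ Prod.snd) ∘ T) = f ∘ (Prod.snd : X × Y → Y) := rfl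
        have := eKyFan_map_le π hTmeas (h ∘ Prod.fst) (f ∘ Prod.snd) hmeas
        rwa [h1, h2] at this
      have e5' : eKyFan π (g ∘ Prod.snd) (f ∘ Prod.snd) ≤ eKyFan μY f g := by
        rw [eKyFan_comm]
        have := eKyFan_comp_le π measurable_snd f g
        rwa [hπ2] at this
      calc eKyFan π' (h ∘ Prod.fst) (g ∘ Prod.snd)
          ≤ eKyFan π' (h ∘ Prod.fst) (f ∘ Prod.snd) +
            eKyFan π' (f ∘ Prod.snd) (g ∘ Prod.snd) := eKyFan_triangle _ _ _ _
        _ ≤ eKyFan π ((h ∘ φ) ∘ Prod.fst) (f ∘ Prod.snd) + eKyFan μY f g :=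
            add_le_add e3 e2
        _ ≤ (eKyFan π ((h ∘ φ) ∘ Prod.fst) (g ∘ Prod.snd) +
              eKyFan π (g ∘ Prod.snd) (f ∘ Prod.snd)) + eKyFan μY f g :=
            add_le_add_left (eKyFan_triangle _ _ _ _) _
        _ ≤ (c + eKyFan μY f g) + eKyFan μY f g :=
            add_le_add_left (add_le_add hg.2 e5') _
        _ ≤ (c + (ε : ℝ≥0∞) / 2) + (ε : ℝ≥0∞) / 2 :=
            add_le_add (add_le_add le_rfl hfg.le) hfg.le
        _ = c + (ε : ℝ≥0∞) := by rw [add_assoc, ENNReal.add_halves]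
    refine le_trans (iInf₂_le π' ⟨hm1, hm2⟩) ?_
    refine max_le (iSup₂_le ?_) (iSup₂_le ?_)
    · rintro a ⟨h, hh, rfl⟩
      exact le_trans (iInf₂_le (u (h ∘ φ) ∘ Prod.snd) ⟨u (h ∘ φ), ⟨h, hh, rfl⟩, rfl⟩)
        (key h hh)
    · rintro b ⟨g, ⟨h, hh, rfl⟩, rfl⟩
      exact le_trans (iInf₂_le (h ∘ Prod.fst) ⟨h, hh, rfl⟩) (key h hh)
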